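/- For all positive integers n and k, C(n,k) − C(⌊n/2⌋,k) − n·C(⌊n/3⌋,k) ≤ f_k(n) ≤ C(n,k) − C(⌊n/2⌋,k), where C denotes the binomial coefficient. -/
import Mathlib


/-- `fk n k` is the number of relatively prime subsets of `{1,2,...,n}` of
cardinality `k`, i.e. subsets `A` of `{1,...,n}` with `|A| = k` and `gcd(A) = 1`. -/
def fk (n k : ℕ) : ℕ :=
  ((Finset.Icc 1 n).powerset.filter (fun A => A.card = k ∧ A.gcd id = 1)).card


open Finset

private lemma mult_mem {n d x : ℕ} (hd : 0 < d) :
    x ∈ (Finset.Icc 1 (n / d)).image (fun y => d * y) ↔ x ∈ Finset.Icc 1 n ∧ d ∣ x := by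
  simp only [mem_image, mem_Icc]
  constructor
  · rintro ⟨y, ⟨hy1, hy2⟩, rfl⟩
    refine ⟨⟨Nat.one_le_iff_ne_zero.2 (by positivity), ?_⟩, ⟨y, rfl⟩⟩
    calc d * y ≤ d * (n / d) := Nat.mul_le_mul_left d hy2
    _ ≤ n := Nat.mul_div_le n d
  · rintro ⟨⟨hx1, hx2⟩, y, rfl⟩
    refine ⟨y, ⟨Nat.one_le_iff_ne_zero.2 (by rintro rfl; simp at hx1), ?_⟩, rfl⟩
    exact Nat.le_div_iff_mul_le hd |>.2 (by linarith [hx2, Nat.mul_comm d y])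

private lemma mult_card (n d : ℕ) (hd : 0 < d) :
    ((Finset.Icc 1 (n / d)).image (fun y => d * y)).card = n / d := by
  rw [Finset.card_image_of_injective _ (mul_right_injective₀ hd.ne')]
  simp


theorem fk_bounds (n k : ℕ) (hn : 0 < n) (hk : 0 < k) :
    ((n.choose k : ℤ) - (n / 2).choose k - n * (n / 3).choose k) ≤ (fk n k : ℤ) ∧
      (fk n k : ℤ) ≤ (n.choose k : ℤ) - (n / 2).choose k := by
  classical
  set M : ℕ → Finset ℕ := fun d => (Finset.Icc 1 (n / d)).image (fun y => d * y) with hM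
  set T := (Finset.Icc 1 n).powersetCard k with hT
  have hTcard : T.card = n.choose k := by
    rw [hT, card_powersetCard, Nat.card_Icc]; simp
  have hfk : fk n k = (T.filter (fun A => A.gcd id = 1)).card := by
    rw [fk, hT, powersetCard_eq_filter, filter_filter]
  set B := T.filter (fun A => ¬ A.gcd id = 1) with hB
  have key : (T.filter (fun A => A.gcd id = 1)).card + B.card = n.choose k := by
    rw [← hTcard]; exact card_filter_add_card_filter_not _
  -- lower bound on B
  have hB1 : (n / 2).choose k ≤ B.card := by
    have hsub : (M 2).powersetCard k ⊆ B := by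
      intro A hA
      rw [mem_powersetCard] at hA
      obtain ⟨hAs, hAc⟩ := hA
      rw [hB, mem_filter, hT, mem_powersetCard]
      refine ⟨⟨fun x hx => ((mult_mem two_pos).1 (hAs hx)).1, hAc⟩, ?_⟩
      intro hg
      have h2 : (2 : ℕ) ∣ A.gcd id := Finset.dvd_gcd fun x hx => ((mult_mem two_pos).1 (hAs hx)).2
      rw [hg] at h2; omega
    calc (n / 2).choose k = ((M 2).powersetCard k).card := by
          rw [card_powersetCard, hM, mult_card n 2 two_pos]
    _ ≤ B.card := card_le_card hsub
  -- upper bound on B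
  have hB2 : B.card ≤ (n / 2).choose k + n * (n / 3).choose k := by
    have hsub : B ⊆ (Finset.Icc 2 n).biUnion (fun d => (M d).powersetCard k) := by
      intro A hA
      rw [hB, mem_filter, hT, mem_powersetCard] at hA
      obtain ⟨⟨hAs, hAc⟩, hg⟩ := hA
      have hne : A.Nonempty := card_pos.1 (hAc ▸ hk)
      obtain ⟨a, ha⟩ := hne
      have ha1 : 1 ≤ a ∧ a ≤ n := mem_Icc.1 (hAs ha)
      have hgd : A.gcd id ∣ a := Finset.gcd_dvd ha
      have hg0 : A.gcd id ≠ 0 := fun h => by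
        rw [h] at hgd; exact absurd (Nat.eq_zero_of_zero_dvd hgd) (by omega)
      have hgle : A.gcd id ≤ n := le_trans (Nat.le_of_dvd (by omega) hgd) ha1.2
      rw [mem_biUnion]
      refine ⟨A.gcd id, mem_Icc.2 ⟨by omega, hgle⟩, ?_⟩
      rw [mem_powersetCard]
      refine ⟨fun x hx => (mult_mem (by omega)).2 ⟨hAs hx, Finset.gcd_dvd hx⟩, hAc⟩
    have h1 : B.card ≤ ∑ d ∈ Finset.Icc 2 n, (n / d).choose k := by
      calc B.card ≤ ((Finset.Icc 2 n).biUnion (fun d => (M d).powersetCard k)).card :=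
            card_le_card hsub
      _ ≤ ∑ d ∈ Finset.Icc 2 n, ((M d).powersetCard k).card := card_biUnion_le
      _ = ∑ d ∈ Finset.Icc 2 n, (n / d).choose k := by
            apply Finset.sum_congr rfl
            intro d hd
            have hd2 : 2 ≤ d := (mem_Icc.1 hd).1
            rw [card_powersetCard, hM, mult_card n d (by omega)]
    refine le_trans h1 ?_
    rcases le_or_gt 2 n with h2n | h2n
    · rw [show Finset.Icc 2 n = insert 2 (Finset.Icc 3 n) by
        ext x; simp only [mem_insert, mem_Icc]; omega]
      rw [Finset.sum_insert (by simp)]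
      gcongr
      calc ∑ d ∈ Finset.Icc 3 n, (n / d).choose k
          ≤ ∑ _d ∈ Finset.Icc 3 n, (n / 3).choose k := by
            apply Finset.sum_le_sum
            intro d hd
            exact Nat.choose_le_choose k (Nat.div_le_div_left (mem_Icc.1 hd).1 (by omega))
      _ = (Finset.Icc 3 n).card * (n / 3).choose k := by rw [Finset.sum_const, smul_eq_mul]
      _ ≤ n * (n / 3).choose k := by
            apply Nat.mul_le_mul_right
            rw [Nat.card_Icc]; omega
    · interval_cases n
      · simp
  rw [hfk] at *
  omega
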